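/- Let μ be a finite positive Borel measure on an open set Ω ⊆ ℝⁿ and τ : Ω → Λ_h(ℝⁿ) a Borel map with ∫_Ω |τ| dμ < +∞ (1 ≤ h ≤ n). Let ω be a continuous differential l-form on an open set U ⊆ Ω with 1 ≤ l ≤ h−1, and let K := K(τ, ω). If x ∈ U satisfies the Lebesgue-point conditions (3.2) and x is a 0-superdensity point of K with respect to the measure |τ|μ, then x ∈ K. -/

import Mathlib

open MeasureTheory Metric Filter ENNReal Topology

noncomputable section

/-- Euclidean `n`-space. -/
abbrev Euc (n : ℕ) := EuclideanSpace ℝ (Fin n)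

/-- Coordinates of an element of the exterior algebra of `ℝⁿ` with respect to the
standard basis `{e_s : s ⊆ {1,…,n}}`.  The degree-`k` part corresponds to the
coefficients indexed by sets of cardinality `k`, i.e. to `Λ_k(ℝⁿ)` (resp. `Λ^k(ℝⁿ)`). -/
abbrev MV (n : ℕ) := Finset (Fin n) → ℝ

namespace MV

variable {n : ℕ}

/-- `v` belongs to `Λ_k(ℝⁿ)` (equivalently `Λ^k(ℝⁿ)`): only coefficients of degree `k`
are nonzero. -/
def IsGrade (k : ℕ) (v : MV n) : Prop := ∀ s : Finset (Fin n), s.card ≠ k → v s = 0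

/-- The duality pairing `⟨ζ; α⟩ := Σ_i ζ_i α_i`. -/
def pair (v w : MV n) : ℝ := ∑ s : Finset (Fin n), v s * w s

/-- The sign `(-1)^{#{(a,b) ∈ s × t : b < a}}` showing up in the wedge product of basis
elements: `e_s ∧ e_t = sign s t • e_{s ∪ t}` for disjoint `s`, `t`. -/
def sign (s t : Finset (Fin n)) : ℝ :=
  (-1 : ℝ) ^ ((s ×ˢ t).filter fun p => p.2 < p.1).card

/-- The wedge product, in coordinates. -/
def wedge (v w : MV n) : MV n :=
  fun u => ∑ s ∈ u.powerset, sign s (u \ s) * v s * w (u \ s)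

/-- The basis multivector `e_t` (resp. basis covector `dx_t`). -/
def delta (t : Finset (Fin n)) : MV n := fun s => if s = t then 1 else 0

/-- Interior multiplication `ζ ⌟ α`, characterized by `⟨ζ ⌟ α; β⟩ = ⟨ζ; α ∧ β⟩`. -/
def imul (v a : MV n) : MV n := fun t => pair v (wedge a (delta t))

/-- The canonical embedding `ℝⁿ = Λ_1(ℝⁿ) ↪ Λ_•(ℝⁿ)`. -/
def embed (x : Euc n) : MV n := fun s => ∑ i : Fin n, if s = {i} then x i else 0

/-- The canonical identification of the degree-one part of `Λ_•(ℝⁿ)` with `ℝⁿ`. -/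
def toVec (v : MV n) : Euc n := WithLp.toLp 2 (fun i => v {i})

/-- The wedge product `w 0 ∧ w 1 ∧ ⋯ ∧ w (k-1)` of a family of vectors of `ℝⁿ`. -/
def wedgeFam {k : ℕ} (w : Fin k → Euc n) : MV n :=
  (List.ofFn fun i => embed (w i)).foldr wedge (delta ∅)

/-- A `k`-vector is simple if it is a wedge product of `k` vectors of `ℝⁿ`. -/
def IsSimple (k : ℕ) (v : MV n) : Prop := ∃ w : Fin k → Euc n, v = wedgeFam w

/-- `span(v) := {v ⌟ α : α ∈ Λ^{k-1}(ℝⁿ)} ⊆ ℝⁿ`, for `v ∈ Λ_k(ℝⁿ)`. -/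
def spanSet (k : ℕ) (v : MV n) : Set (Euc n) :=
  {u | ∃ a : MV n, IsGrade (k - 1) a ∧ u = toVec (imul v a)}

/-- The (Euclidean) norm of a multivector. -/
def norm' (v : MV n) : ℝ := Real.sqrt (∑ s : Finset (Fin n), v s ^ 2)

/-- The exterior derivative of a (multi)covector field, in coordinates:
`(dψ)_u(x) = Σ_{i ∈ u} sign({i}, u \ {i}) ∂_i ψ_{u \ {i}}(x)`. -/
def extDeriv (ψ : Euc n → MV n) (x : Euc n) : MV n :=
  fun u => ∑ i ∈ u, sign {i} (u \ {i}) * fderiv ℝ ψ x (EuclideanSpace.single i 1) (u \ {i})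

end MV

/-- `x` is an `h`-superdensity point of `E` with respect to `λ`, i.e.
`λ(B_r(x) ∖ E) = λ(B_r(x))·o(r^h)` as `r → 0+`. -/
def SuperdensityPt {n : ℕ} (lam : Measure (Euc n)) (h : ℝ) (E : Set (Euc n)) (x : Euc n) :
    Prop :=
  ∀ ε > (0 : ℝ), ∃ r₀ > (0 : ℝ), ∀ r : ℝ, 0 < r → r < r₀ →
    lam (ball x r \ E) ≤ ENNReal.ofReal (ε * r ^ h) * lam (ball x r)

/-- The upper `s`-density `Θ^{*s}(μ, x) := limsup_{r→0+} μ(B_r(x))/(2r)^s`. -/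
def upperDensity {n : ℕ} (μ : Measure (Euc n)) (s : ℝ) (x : Euc n) : ℝ≥0∞ :=
  Filter.limsup (fun r : ℝ => μ (ball x r) / ENNReal.ofReal ((2 * r) ^ s)) (𝓝[>] 0)

/-- The lower `s`-density `Θ^s_*(μ, x) := liminf_{r→0+} μ(B_r(x))/(2r)^s`. -/
def lowerDensity {n : ℕ} (μ : Measure (Euc n)) (s : ℝ) (x : Euc n) : ℝ≥0∞ :=
  Filter.liminf (fun r : ℝ => μ (ball x r) / ENNReal.ofReal ((2 * r) ^ s)) (𝓝[>] 0)

/-- The upper derivative `D̄(λ, μ, x) := limsup_{r→0+} λ(B_r(x))/μ(B_r(x))`. -/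
def upperDeriv {n : ℕ} (lam μ : Measure (Euc n)) (x : Euc n) : ℝ≥0∞ :=
  Filter.limsup (fun r : ℝ => lam (ball x r) / μ (ball x r)) (𝓝[>] 0)

/-- The total variation `|τμ| = |τ|μ` of the current `T = τμ`. -/
def totalVar {n : ℕ} (τ : Euc n → MV n) (μ : Measure (Euc n)) : Measure (Euc n) :=
  μ.withDensity fun x => ENNReal.ofReal (MV.norm' (τ x))

/-- The Lebesgue-point conditions (3.2): the `μ`-averages of `τ` and of `|τ|` on `B_r(x)`
converge to `τ(x)` and `|τ(x)|` respectively, as `r → 0+`. -/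
def LebesguePt {n : ℕ} (μ : Measure (Euc n)) (τ : Euc n → MV n) (x : Euc n) : Prop :=
  Tendsto (fun r : ℝ => (μ (ball x r)).toReal⁻¹ • ∫ y in ball x r, τ y ∂μ)
    (𝓝[>] 0) (𝓝 (τ x)) ∧
  Tendsto (fun r : ℝ => (∫ y in ball x r, MV.norm' (τ y) ∂μ) / (μ (ball x r)).toReal)
    (𝓝[>] 0) (𝓝 (MV.norm' (τ x)))

/-- `K(τ, ω) := {y ∈ U : ⟨τ(y) ⌟ α; ω_y⟩ = 0 for all α ∈ Λ^{h-l}(ℝⁿ)}`, where `τ` is an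
`h`-vectorfield and `ω` a differential `l`-form on `U`. -/
def Kset {n : ℕ} (h l : ℕ) (U : Set (Euc n)) (τ : Euc n → MV n) (ω : Euc n → MV n) :
    Set (Euc n) :=
  {y ∈ U | ∀ a : MV n, MV.IsGrade (h - l) a → MV.pair (MV.imul (τ y) a) (ω y) = 0}

/-- `T = τμ` is a normal `h`-current on `Ω` with `∂T = τ'μ'` : both measures are finite,
`τ, τ'` are Borel and integrable, take values in `Λ_h` resp. `Λ_{h-1}`, and
`∫ ⟨τ'; ψ⟩ dμ' = ∫ ⟨τ; dψ⟩ dμ` for every smooth compactly supported `(h-1)`-form `ψ` on `Ω`. -/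
def IsNormalPair {n : ℕ} (h : ℕ) (Ω : Set (Euc n)) (μ μ' : Measure (Euc n))
    (τ τ' : Euc n → MV n) : Prop :=
  IsFiniteMeasure μ ∧ IsFiniteMeasure μ' ∧
  Measurable τ ∧ Measurable τ' ∧
  Integrable τ μ ∧ Integrable τ' μ' ∧
  (∀ x, MV.IsGrade h (τ x)) ∧ (∀ x, MV.IsGrade (h - 1) (τ' x)) ∧
  ∀ ψ : Euc n → MV n, ContDiff ℝ (⊤ : ℕ∞) ψ → HasCompactSupport ψ → tsupport ψ ⊆ Ω →
    (∀ y, MV.IsGrade (h - 1) (ψ y)) →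
    ∫ y, MV.pair (τ' y) (ψ y) ∂μ' = ∫ y, MV.pair (τ y) (MV.extDeriv ψ y) ∂μ

/-- `D` is a `k`-distribution of class `C^p` on `Ω`: each `D(x)` is a `k`-dimensional
subspace and, locally, `D` is the intersection of the kernels of `n - k` differential
1-forms of class `C^p` (the defining forms). -/
def IsDistribution {n : ℕ} (p : ℕ∞) (k : ℕ) (Ω : Set (Euc n))
    (D : Euc n → Submodule ℝ (Euc n)) : Prop :=
  (∀ x ∈ Ω, Module.finrank ℝ (D x) = k) ∧
  ∀ x ∈ Ω, ∃ U : Set (Euc n), U ⊆ Ω ∧ IsOpen U ∧ x ∈ U ∧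
    ∃ ω : Fin (n - k) → Euc n → (Euc n →L[ℝ] ℝ),
      (∀ j, ContDiffOn ℝ p (ω j) U) ∧
      ∀ y ∈ U, D y = ⨅ j, LinearMap.ker (ω j y).toLinearMap

/-- The tangency set `Γ(τ, D) := {x ∈ Ω : span(τ(x)) ⊆ D(x)}` of a `k`-vectorfield `τ`
with respect to a distribution `D`. -/
def tangencySet {n : ℕ} (k : ℕ) (Ω : Set (Euc n)) (τ : Euc n → MV n)
    (D : Euc n → Submodule ℝ (Euc n)) : Set (Euc n) :=
  {x ∈ Ω | MV.spanSet k (τ x) ⊆ (D x : Set (Euc n))}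

/-- A `C¹` `k`-distribution `D` is involutive at `x`: for some family of `C¹` defining
forms `ω⁽¹⁾, …, ω⁽ⁿ⁻ᵏ⁾` near `x`, each `(dω⁽ʲ⁾)_x` vanishes on `D(x) × D(x)`;
here `(dω)_x(u, v) = (Dω_x u)(v) − (Dω_x v)(u)`. -/
def InvolutiveAt {n : ℕ} (k : ℕ) (Ω : Set (Euc n)) (D : Euc n → Submodule ℝ (Euc n))
    (x : Euc n) : Prop :=
  ∃ U : Set (Euc n), U ⊆ Ω ∧ IsOpen U ∧ x ∈ U ∧
    ∃ ω : Fin (n - k) → Euc n → (Euc n →L[ℝ] ℝ),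
      (∀ j, ContDiffOn ℝ 1 (ω j) U) ∧
      (∀ y ∈ U, D y = ⨅ j, LinearMap.ker (ω j y).toLinearMap) ∧
      ∀ j, ∀ u ∈ D x, ∀ v ∈ D x, fderiv ℝ (ω j) x u v = fderiv ℝ (ω j) x v u


namespace MVAux

open MV

variable {n : ℕ}

lemma norm'_nonneg (v : MV n) : 0 ≤ MV.norm' v := Real.sqrt_nonneg _

lemma abs_le_norm' (v : MV n) (s : Finset (Fin n)) : |v s| ≤ MV.norm' v := by
  rw [← Real.sqrt_sq_eq_abs]
  exact Real.sqrt_le_sqrt (Finset.single_le_sum (fun t _ => sq_nonneg (v t)) (Finset.mem_univ s))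

lemma norm'_le_sum (v : MV n) : MV.norm' v ≤ ∑ s : Finset (Fin n), |v s| := by
  have h1 : ∑ s : Finset (Fin n), v s ^ 2 ≤ (∑ s : Finset (Fin n), |v s|) ^ 2 := by
    have := Finset.sum_sq_le_sq_sum_of_nonneg (s := (Finset.univ : Finset (Finset (Fin n))))
      (f := fun s => |v s|) (fun i _ => abs_nonneg _)
    simpa [sq_abs] using this
  calc MV.norm' v ≤ Real.sqrt ((∑ s : Finset (Fin n), |v s|) ^ 2) := Real.sqrt_le_sqrt h1
    _ = ∑ s : Finset (Fin n), |v s| :=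
        Real.sqrt_sq (Finset.sum_nonneg fun i _ => abs_nonneg _)

lemma norm'_zero : MV.norm' (0 : MV n) = 0 := by simp [MV.norm']

lemma norm'_continuous : Continuous (MV.norm' : MV n → ℝ) := by
  unfold MV.norm'
  exact Real.continuous_sqrt.comp (by continuity)

/-- the constant in the bilinear bound -/
def Ma (a : MV n) : ℝ := ∑ t : Finset (Fin n), ∑ s : Finset (Fin n), |MV.wedge a (MV.delta t) s|

lemma Ma_nonneg (a : MV n) : 0 ≤ Ma a :=
  Finset.sum_nonneg fun _ _ => Finset.sum_nonneg fun _ _ => abs_nonneg _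

lemma abs_pair_le (v b : MV n) : |MV.pair v b| ≤ (∑ s : Finset (Fin n), |b s|) * MV.norm' v := by
  calc |MV.pair v b| ≤ ∑ s : Finset (Fin n), |v s * b s| := Finset.abs_sum_le_sum_abs _ _
    _ ≤ ∑ s : Finset (Fin n), |b s| * MV.norm' v := by
        refine Finset.sum_le_sum fun s _ => ?_
        rw [abs_mul, mul_comm]
        exact mul_le_mul_of_nonneg_left (abs_le_norm' v s) (abs_nonneg _)
    _ = (∑ s : Finset (Fin n), |b s|) * MV.norm' v := by rw [Finset.sum_mul]

lemma abs_pair_imul_le (a v w : MV n) :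
    |MV.pair (MV.imul v a) w| ≤ Ma a * MV.norm' v * MV.norm' w := by
  have : |MV.pair (MV.imul v a) w| ≤
      ∑ t : Finset (Fin n), |MV.pair v (MV.wedge a (MV.delta t))| * |w t| := by
    calc |MV.pair (MV.imul v a) w| ≤ ∑ t : Finset (Fin n), |MV.imul v a t * w t| :=
          Finset.abs_sum_le_sum_abs _ _
      _ = ∑ t : Finset (Fin n), |MV.pair v (MV.wedge a (MV.delta t))| * |w t| := by
          simp [MV.imul, abs_mul]
  refine this.trans ?_
  rw [Ma, Finset.sum_mul, Finset.sum_mul]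
  refine Finset.sum_le_sum fun t _ => ?_
  calc |MV.pair v (MV.wedge a (MV.delta t))| * |w t|
      ≤ ((∑ s : Finset (Fin n), |MV.wedge a (MV.delta t) s|) * MV.norm' v) * MV.norm' w := by
        refine mul_le_mul (abs_pair_le _ _) (abs_le_norm' w t) (abs_nonneg _) ?_
        exact mul_nonneg (Finset.sum_nonneg fun _ _ => abs_nonneg _) (norm'_nonneg v)
    _ = (∑ s : Finset (Fin n), |MV.wedge a (MV.delta t) s|) * MV.norm' v * MV.norm' w := by ring

lemma pair_sub_right (u w1 w2 : MV n) :
    MV.pair u (w1 - w2) = MV.pair u w1 - MV.pair u w2 := by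
  simp [MV.pair, mul_sub, Finset.sum_sub_distrib]

/-- The pairing against `a` and `w` as a continuous linear map in `v`. -/
def Phi (a w : MV n) : MV n →L[ℝ] ℝ :=
  LinearMap.toContinuousLinearMap
    { toFun := fun v => MV.pair (MV.imul v a) w
      map_add' := by
        intro v v'
        simp only [MV.pair, MV.imul, Pi.add_apply]
        rw [← Finset.sum_add_distrib]
        refine Finset.sum_congr rfl fun t _ => ?_
        rw [← add_mul, ← Finset.sum_add_distrib]
        congr 1
        exact Finset.sum_congr rfl fun s _ => by ring
      map_smul' := by
        intro c v
        simp only [MV.pair, MV.imul, Pi.smul_apply, smul_eq_mul, RingHom.id_apply]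
        rw [Finset.mul_sum]
        refine Finset.sum_congr rfl fun t _ => ?_
        rw [← mul_assoc, Finset.mul_sum]
        congr 1
        exact Finset.sum_congr rfl fun s _ => by ring }

lemma Phi_apply (a w v : MV n) : Phi a w v = MV.pair (MV.imul v a) w := rfl

end MVAux


set_option maxHeartbeats 2000000 in
/-- **Remark 3.2.** Let `μ` be a finite positive Borel measure on `Ω` and `τ : Ω → Λ_h(ℝⁿ)`
Borel with `∫_Ω |τ| dμ < ∞`.  Let `ω` be a continuous differential `l`-form on an open
`U ⊆ Ω` (`1 ≤ l ≤ h-1`) and `K := K(τ, ω)`.  If `x ∈ U` satisfies the Lebesgue-point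
conditions (3.2) and is a `0`-superdensity point of `K` with respect to `|τ|μ`, then `x ∈ K`. -/
theorem statement6 {n h l : ℕ} (hh : h ≤ n) (hl : 1 ≤ l) (hlh : l + 1 ≤ h)
    (Ω : Set (Euc n)) (hΩ : IsOpen Ω)
    (μ : Measure (Euc n)) [IsFiniteMeasure μ]
    (τ : Euc n → MV n) (hτm : Measurable τ) (hτi : Integrable τ μ)
    (hτg : ∀ x, MV.IsGrade h (τ x))
    (U : Set (Euc n)) (hUopen : IsOpen U) (hUΩ : U ⊆ Ω)
    (ω : Euc n → MV n) (hωc : ContinuousOn ω U) (hωg : ∀ y, MV.IsGrade l (ω y))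
    (x : Euc n) (hxU : x ∈ U)
    (hleb : LebesguePt μ τ x)
    (hsd : SuperdensityPt (totalVar τ μ) 0 (Kset h l U τ ω) x) :
    x ∈ Kset h l U τ ω := by
  -- unfold membership in `Kset`
  rw [Kset, Set.mem_setOf_eq]
  refine ⟨hxU, fun a ha => ?_⟩
  classical
  -- basic integrability of `norm' ∘ τ`
  have hnt_meas : Measurable fun y => MV.norm' (τ y) :=
    MVAux.norm'_continuous.measurable.comp hτm
  have hnt_int : Integrable (fun y => MV.norm' (τ y)) μ := by
    refine Integrable.mono' (hτi.norm.const_mul ((Fintype.card (Finset (Fin n)) : ℝ)))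
      hnt_meas.aestronglyMeasurable (ae_of_all _ fun y => ?_)
    rw [Real.norm_eq_abs, abs_of_nonneg (MVAux.norm'_nonneg _)]
    calc MV.norm' (τ y) ≤ ∑ s : Finset (Fin n), |τ y s| := MVAux.norm'_le_sum _
      _ ≤ ∑ _s : Finset (Fin n), ‖τ y‖ := by
          refine Finset.sum_le_sum fun s _ => ?_
          simpa [Real.norm_eq_abs] using norm_le_pi_norm (τ y) s
      _ = (Fintype.card (Finset (Fin n)) : ℝ) * ‖τ y‖ := by
          simp [Finset.sum_const, nsmul_eq_mul]
  set K := Kset h l U τ ω with hK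
  set lam := totalVar τ μ with hlamdef
  set M := MVAux.Ma a with hMdef
  have hM0 : 0 ≤ M := MVAux.Ma_nonneg a
  set W0 := MV.norm' (ω x) with hW0def
  have hW00 : 0 ≤ W0 := MVAux.norm'_nonneg _
  set T0 := MV.norm' (τ x) + 1 with hT0def
  have hT00 : 0 < T0 := by
    have := MVAux.norm'_nonneg (τ x); simp only [hT0def]; linarith
  set C1 := M * (W0 + 1) with hC1def
  have hC10 : 0 ≤ C1 := mul_nonneg hM0 (by linarith)
  set Φ := MVAux.Phi a (ω x) with hΦdef
  have hΦτx : MV.pair (MV.imul (τ x) a) (ω x) = Φ (τ x) := rfl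
  rw [hΦτx]
  -- density and λ-finiteness facts
  set dens := fun y => ENNReal.ofReal (MV.norm' (τ y)) with hdensdef
  have hdens_meas : Measurable dens := hnt_meas.ennreal_ofReal
  have hdens_fin : ∫⁻ y, dens y ∂μ < ⊤ := by
    have heq : dens = fun y => ‖MV.norm' (τ y)‖ₑ := by
      funext y
      rw [hdensdef, ← ofReal_norm_eq_enorm, Real.norm_eq_abs,
        abs_of_nonneg (MVAux.norm'_nonneg _)]
    rw [heq]
    exact hnt_int.2
  -- openness of U: a radius with ball ⊆ U
  obtain ⟨δU, hδU0, hδU⟩ := Metric.isOpen_iff.1 hUopen x hxU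
  -- the key estimate
  have key : ∀ ε' > (0 : ℝ), |Φ (τ x)| ≤ ε' := by
    intro ε' hε'
    set εω := min 1 (ε' / (4 * (M + 1) * T0)) with hεωdef
    have hεω0 : 0 < εω := lt_min one_pos (by positivity)
    set ε := ε' / (4 * (C1 + 1) * T0) with hεdef
    have hε0 : 0 < ε := by positivity
    obtain ⟨r₀, hr₀, hsd'⟩ := hsd ε hε0
    -- continuity of ω at x
    have hωx : ContinuousAt ω x := hωc.continuousAt (hUopen.mem_nhds hxU)
    have hc1 : Tendsto (fun y => MV.norm' (ω x - ω y)) (𝓝 x) (𝓝 0) := by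
      have h1 : Tendsto (fun y => ω x - ω y) (𝓝 x) (𝓝 (ω x - ω x)) :=
        tendsto_const_nhds.sub hωx
      have h2 := (MVAux.norm'_continuous.tendsto _).comp h1
      simpa [MVAux.norm'_zero, Function.comp_def] using h2
    have hc2 : Tendsto (fun y => MV.norm' (ω y)) (𝓝 x) (𝓝 W0) :=
      (MVAux.norm'_continuous.tendsto _).comp hωx
    have hev : ∀ᶠ y in 𝓝 x, MV.norm' (ω x - ω y) < εω ∧ MV.norm' (ω y) < W0 + 1 :=
      (hc1.eventually_lt_const hεω0).and (hc2.eventually_lt_const (lt_add_one _))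
    obtain ⟨δω, hδω0, hδω⟩ := Metric.eventually_nhds_iff_ball.1 hev
    -- eventually-statements on the radius
    have hid : Tendsto (fun r : ℝ => r) (𝓝[>] (0 : ℝ)) (𝓝 0) :=
      tendsto_id.mono_left nhdsWithin_le_nhds
    have tendstoΦ : Tendsto
        (fun r : ℝ => Φ ((μ (ball x r)).toReal⁻¹ • ∫ y in ball x r, τ y ∂μ))
        (𝓝[>] (0 : ℝ)) (𝓝 (Φ (τ x))) :=
      (Φ.continuous.tendsto _).comp hleb.1
    have habs : Tendsto
        (fun r : ℝ => |Φ ((μ (ball x r)).toReal⁻¹ • ∫ y in ball x r, τ y ∂μ) - Φ (τ x)|)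
        (𝓝[>] (0 : ℝ)) (𝓝 0) := by
      have := (tendstoΦ.sub (tendsto_const_nhds (x := Φ (τ x)))).abs
      simpa using this
    have E1 := habs.eventually_lt_const (show (0:ℝ) < ε' / 4 by positivity)
    have E2 := hleb.2.eventually_lt_const (lt_add_one (MV.norm' (τ x)))
    have E3 := hid.eventually_lt_const hr₀
    have E4 := hid.eventually_lt_const hδU0
    have E5 := hid.eventually_lt_const hδω0
    have E6 : ∀ᶠ r in 𝓝[>] (0 : ℝ), (0:ℝ) < r := eventually_mem_nhdsWithin
    obtain ⟨r, hE1, hE2, hE3, hE4, hE5, hr0⟩ :=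
      (E1.and (E2.and (E3.and (E4.and (E5.and E6))))).exists
    -- fix the ball
    set B := ball x r with hBdef
    have hBmeas : MeasurableSet B := measurableSet_ball
    have hBU : B ⊆ U := (ball_subset_ball hE4.le).trans hδU
    have hBω : ∀ y ∈ B, MV.norm' (ω x - ω y) < εω ∧ MV.norm' (ω y) < W0 + 1 :=
      fun y hy => hδω y (ball_subset_ball hE5.le hy)
    set m := (μ B).toReal with hmdef
    have hm0 : (0:ℝ) ≤ m⁻¹ := inv_nonneg.2 ENNReal.toReal_nonneg
    set Iτ := ∫ y in B, MV.norm' (τ y) ∂μ with hIdef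
    have hIτ0 : 0 ≤ Iτ := by rw [hIdef]; exact integral_nonneg fun y => MVAux.norm'_nonneg _
    set A := m⁻¹ • ∫ y in B, τ y ∂μ with hAdef
    -- ω is a.e. measurable on B
    have hωae : AEMeasurable ω (μ.restrict B) := (hωc.mono hBU).aemeasurable hBmeas
    -- integrability helper
    have hint : ∀ W : Euc n → MV n, AEMeasurable W (μ.restrict B) → ∀ C : ℝ,
        (∀ y ∈ B, MV.norm' (W y) ≤ C) →
        IntegrableOn (fun y => MV.pair (MV.imul (τ y) a) (W y)) B μ := by
      intro W hW C hC
      have hmeas : AEMeasurable (fun y => MV.pair (MV.imul (τ y) a) (W y))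
          (μ.restrict B) := by
        simp only [MV.pair, MV.imul]
        refine Finset.aemeasurable_fun_sum _ fun t _ => AEMeasurable.mul ?_ ?_
        · exact Finset.aemeasurable_fun_sum _ fun s _ =>
            ((measurable_pi_apply s).comp hτm).aemeasurable.mul_const _
        · exact (measurable_pi_apply t).comp_aemeasurable hW
      refine Integrable.mono' ((hnt_int.integrableOn).const_mul (M * C))
        hmeas.aestronglyMeasurable ?_
      rw [ae_restrict_iff' hBmeas]
      refine ae_of_all _ fun y hy => ?_
      rw [Real.norm_eq_abs]
      have h1 := MVAux.norm'_nonneg (τ y)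
      have h2 := MVAux.norm'_nonneg (W y)
      have h3 := hC y hy
      calc |MV.pair (MV.imul (τ y) a) (W y)| ≤ M * MV.norm' (τ y) * MV.norm' (W y) :=
            MVAux.abs_pair_imul_le a _ _
        _ ≤ M * C * MV.norm' (τ y) := by
            linarith [mul_le_mul_of_nonneg_left h3 (mul_nonneg hM0 h1)]
    have hfint : IntegrableOn (fun y => MV.pair (MV.imul (τ y) a) (ω y)) B μ :=
      hint ω hωae (W0 + 1) fun y hy => (hBω y hy).2.le
    have heint : IntegrableOn (fun y => MV.pair (MV.imul (τ y) a) (ω x - ω y)) B μ :=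
      hint (fun y => ω x - ω y) (aemeasurable_const.sub hωae) εω fun y hy => (hBω y hy).1.le
    -- splitting identity
    have hsplit : ∫ y in B, Φ (τ y) ∂μ =
        (∫ y in B, MV.pair (MV.imul (τ y) a) (ω y) ∂μ) +
          ∫ y in B, MV.pair (MV.imul (τ y) a) (ω x - ω y) ∂μ := by
      rw [← integral_add hfint heint]
      refine setIntegral_congr_fun hBmeas fun y _ => ?_
      rw [show Φ (τ y) = MV.pair (MV.imul (τ y) a) (ω x) from rfl, MVAux.pair_sub_right]
      ring
    -- average identity
    have hΦavg : Φ A = m⁻¹ * ∫ y in B, Φ (τ y) ∂μ := by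
      rw [hAdef, _root_.map_smul, smul_eq_mul, Φ.integral_comp_comm hτi.integrableOn]
    -- bound for the remainder term
    have hebound : |∫ y in B, MV.pair (MV.imul (τ y) a) (ω x - ω y) ∂μ| ≤ M * εω * Iτ := by
      have h1 : |∫ y in B, MV.pair (MV.imul (τ y) a) (ω x - ω y) ∂μ| ≤
          ∫ y in B, |MV.pair (MV.imul (τ y) a) (ω x - ω y)| ∂μ := by
        simpa [Real.norm_eq_abs] using
          norm_integral_le_integral_norm (μ := μ.restrict B)
            fun y => MV.pair (MV.imul (τ y) a) (ω x - ω y)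
      refine h1.trans ?_
      have h2 : ∫ y in B, |MV.pair (MV.imul (τ y) a) (ω x - ω y)| ∂μ ≤
          ∫ y in B, M * εω * MV.norm' (τ y) ∂μ := by
        refine setIntegral_mono_on heint.abs ((hnt_int.integrableOn).const_mul _) hBmeas
          fun y hy => ?_
        have h3 := MVAux.norm'_nonneg (τ y)
        have h4 := MVAux.norm'_nonneg (ω x - ω y)
        have h5 := (hBω y hy).1.le
        calc |MV.pair (MV.imul (τ y) a) (ω x - ω y)| ≤
              M * MV.norm' (τ y) * MV.norm' (ω x - ω y) := MVAux.abs_pair_imul_le a _ _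
          _ ≤ M * εω * MV.norm' (τ y) := by
              linarith [mul_le_mul_of_nonneg_left h5 (mul_nonneg hM0 h3)]
      refine h2.trans (le_of_eq ?_)
      rw [integral_const_mul, hIdef]
    -- λ on measurable sets
    have hlamApply : ∀ s : Set (Euc n), MeasurableSet s → lam s = ∫⁻ y in s, dens y ∂μ :=
      fun s hs => withDensity_apply _ hs
    have hlamB_fin : lam B ≠ ⊤ := by
      rw [hlamApply B hBmeas]
      exact ((setLIntegral_le_lintegral _ _).trans_lt hdens_fin).ne
    have hIτlam : Iτ = (lam B).toReal := by
      rw [hlamApply B hBmeas, hIdef, hdensdef]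
      exact integral_eq_lintegral_of_nonneg_ae (ae_of_all _ fun y => MVAux.norm'_nonneg _)
        hnt_meas.aestronglyMeasurable.restrict
    -- f-term bound via superdensity
    set E := toMeasurable lam (B \ K) with hEdef
    have hEmeas : MeasurableSet E := measurableSet_toMeasurable _ _
    have hEsub : B \ K ⊆ E := subset_toMeasurable _ _
    have hElam : lam E = lam (B \ K) := measure_toMeasurable _
    have hpoint : ∀ y ∈ B, ENNReal.ofReal |MV.pair (MV.imul (τ y) a) (ω y)| ≤
        E.indicator (fun y => ENNReal.ofReal C1 * dens y) y := by
      intro y hy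
      by_cases hyK : y ∈ K
      · obtain ⟨-, hP⟩ := hyK
        have h0 : MV.pair (MV.imul (τ y) a) (ω y) = 0 := hP a ha
        simp [h0]
      · have hyE : y ∈ E := hEsub ⟨hy, hyK⟩
        rw [Set.indicator_of_mem hyE, hdensdef, ← ENNReal.ofReal_mul hC10]
        refine ENNReal.ofReal_le_ofReal ?_
        have h3 := MVAux.norm'_nonneg (τ y)
        have h4 := MVAux.norm'_nonneg (ω y)
        have h5 := (hBω y hy).2.le
        calc |MV.pair (MV.imul (τ y) a) (ω y)| ≤
              M * MV.norm' (τ y) * MV.norm' (ω y) := MVAux.abs_pair_imul_le a _ _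
          _ ≤ C1 * MV.norm' (τ y) := by
              rw [hC1def]
              linarith [mul_le_mul_of_nonneg_left h5 (mul_nonneg hM0 h3)]
    have hflin : ∫⁻ y in B, ENNReal.ofReal |MV.pair (MV.imul (τ y) a) (ω y)| ∂μ ≤
        ENNReal.ofReal C1 * (ENNReal.ofReal ε * lam B) := by
      calc ∫⁻ y in B, ENNReal.ofReal |MV.pair (MV.imul (τ y) a) (ω y)| ∂μ
          ≤ ∫⁻ y in B, E.indicator (fun y => ENNReal.ofReal C1 * dens y) y ∂μ :=
            lintegral_mono_ae ((ae_restrict_iff' hBmeas).2 (ae_of_all _ hpoint))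
        _ ≤ ∫⁻ y, E.indicator (fun y => ENNReal.ofReal C1 * dens y) y ∂μ :=
            setLIntegral_le_lintegral _ _
        _ = ∫⁻ y in E, ENNReal.ofReal C1 * dens y ∂μ := lintegral_indicator hEmeas _
        _ = ENNReal.ofReal C1 * ∫⁻ y in E, dens y ∂μ := lintegral_const_mul _ hdens_meas
        _ = ENNReal.ofReal C1 * lam (B \ K) := by rw [← hlamApply E hEmeas, hElam]
        _ ≤ ENNReal.ofReal C1 * (ENNReal.ofReal ε * lam B) := by
            refine mul_le_mul_right ?_ _
            have h6 := hsd' r hr0 hE3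
            rw [Real.rpow_zero, mul_one] at h6
            exact h6
    have hfbound : |∫ y in B, MV.pair (MV.imul (τ y) a) (ω y) ∂μ| ≤ C1 * ε * Iτ := by
      calc |∫ y in B, MV.pair (MV.imul (τ y) a) (ω y) ∂μ|
          ≤ ∫ y in B, |MV.pair (MV.imul (τ y) a) (ω y)| ∂μ := by
            simpa [Real.norm_eq_abs] using
              norm_integral_le_integral_norm (μ := μ.restrict B)
                fun y => MV.pair (MV.imul (τ y) a) (ω y)
        _ = (∫⁻ y in B, ENNReal.ofReal |MV.pair (MV.imul (τ y) a) (ω y)| ∂μ).toReal :=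
            integral_eq_lintegral_of_nonneg_ae (ae_of_all _ fun y => abs_nonneg _) hfint.abs.1
        _ ≤ (ENNReal.ofReal C1 * (ENNReal.ofReal ε * lam B)).toReal :=
            ENNReal.toReal_mono
              (ENNReal.mul_ne_top ENNReal.ofReal_ne_top
                (ENNReal.mul_ne_top ENNReal.ofReal_ne_top hlamB_fin)) hflin
        _ = C1 * ε * Iτ := by
            rw [ENNReal.toReal_mul, ENNReal.toReal_mul, ENNReal.toReal_ofReal hC10,
              ENNReal.toReal_ofReal hε0.le, ← hIτlam, ← mul_assoc]
    -- combine
    have hsum : |(∫ y in B, MV.pair (MV.imul (τ y) a) (ω y) ∂μ) +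
        ∫ y in B, MV.pair (MV.imul (τ y) a) (ω x - ω y) ∂μ| ≤
        C1 * ε * Iτ + M * εω * Iτ := (abs_add_le _ _).trans (add_le_add hfbound hebound)
    have hImT : Iτ / m ≤ T0 := hE2.le
    have hmain : |Φ A| ≤ (M * εω + C1 * ε) * T0 := by
      rw [hΦavg, hsplit, abs_mul, abs_of_nonneg hm0]
      calc m⁻¹ * |(∫ y in B, MV.pair (MV.imul (τ y) a) (ω y) ∂μ) +
            ∫ y in B, MV.pair (MV.imul (τ y) a) (ω x - ω y) ∂μ|
          ≤ m⁻¹ * (C1 * ε * Iτ + M * εω * Iτ) := mul_le_mul_of_nonneg_left hsum hm0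
        _ = (M * εω + C1 * ε) * (Iτ / m) := by rw [div_eq_mul_inv]; ring
        _ ≤ (M * εω + C1 * ε) * T0 :=
            mul_le_mul_of_nonneg_left hImT
              (add_nonneg (mul_nonneg hM0 hεω0.le) (mul_nonneg hC10 hε0.le))
    -- numeric conclusion
    have hbound1 : M * εω * T0 ≤ ε' / 4 := by
      have h9 : εω ≤ ε' / (4 * (M + 1) * T0) := min_le_right _ _
      have h10 : εω * (4 * (M + 1) * T0) ≤ ε' := (le_div_iff₀ (by positivity)).1 h9
      rw [le_div_iff₀ (by norm_num : (0:ℝ) < 4)]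
      nlinarith [mul_nonneg hεω0.le hT00.le]
    have hbound2 : C1 * ε * T0 ≤ ε' / 4 := by
      have h10 : ε * (4 * (C1 + 1) * T0) ≤ ε' := by
        rw [hεdef, div_mul_cancel₀ _ (by positivity : (4 * (C1 + 1) * T0) ≠ 0)]
      rw [le_div_iff₀ (by norm_num : (0:ℝ) < 4)]
      nlinarith [mul_nonneg hε0.le hT00.le]
    have hexp : (M * εω + C1 * ε) * T0 = M * εω * T0 + C1 * ε * T0 := by ring
    have h7 := abs_sub_abs_le_abs_sub (Φ (τ x)) (Φ A)
    have h8 := abs_sub_comm (Φ (τ x)) (Φ A)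
    have hE1' : |Φ A - Φ (τ x)| < ε' / 4 := hE1
    clear_value A Φ M W0 T0 C1 εω ε Iτ m
    have h9 : |Φ (τ x)| ≤ (M * εω + C1 * ε) * T0 + ε' / 4 := by linarith only [h7, h8, hE1', hmain]
    linarith only [h9, hexp, hbound1, hbound2, hε']

  -- conclude
  have h0 : |Φ (τ x)| ≤ 0 := by
    by_contra hcon
    push_neg at hcon
    have := key (|Φ (τ x)| / 2) (by linarith)
    linarith
  exact abs_nonpos_iff.mp h0
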